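/- Houghton's group H_n is amenable for every n ≥ 1, being an extension of an abelian group by a locally finite group: there is a short exact sequence 1 → Σ_{n,∞} → H_n → ℤ^{n−1} → 1 where Σ_{n,∞} is locally finite (hence amenable) and ℤ^{n−1} is abelian (hence amenable). -/

import Mathlib

def Translates (n : ℕ) (g : Fin n × ℕ → Fin n × ℕ) (m : Fin n → ℤ) : Prop :=
  ∃ K : Finset (Fin n × ℕ), ∀ x : Fin n × ℕ, x ∉ K →
    (g x).1 = x.1 ∧ ((g x).2 : ℤ) = (x.2 : ℤ) + m x.1

def IsEventualTranslation (n : ℕ) (g : Fin n × ℕ → Fin n × ℕ) : Prop :=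
  ∃ m : Fin n → ℤ, Translates n g m

/-- Houghton's group `H_n`, as the subgroup of `Perm Y_n` consisting of the
eventual translations. -/
def Houghton (n : ℕ) : Subgroup (Equiv.Perm (Fin n × ℕ)) where
  carrier := {g | IsEventualTranslation n ⇑g}
  one_mem' := ⟨0, ∅, by intro x _; simp⟩
  mul_mem' := by
    rintro a b ⟨ma, Ka, ha⟩ ⟨mb, Kb, hb⟩
    refine ⟨fun i => mb i + ma i,
      Kb ∪ Ka.preimage b (b.injective.injOn), ?_⟩
    intro x hx
    simp only [Finset.mem_union, Finset.mem_preimage, not_or] at hx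
    have h1 := hb x hx.1
    have h2 := ha (b x) hx.2
    refine ⟨by simp [Equiv.Perm.mul_apply, h2.1, h1.1], ?_⟩
    have : ((a (b x)).2 : ℤ) = ((b x).2 : ℤ) + ma (b x).1 := h2.2
    simp only [Equiv.Perm.mul_apply, this, h1.1, h1.2]
    ring
  inv_mem' := by
    rintro g ⟨m, K, hK⟩
    refine ⟨fun i => -m i, K.image g, ?_⟩
    intro x hx
    have hy : g.symm x ∉ K := by
      intro h
      exact hx (Finset.mem_image.2 ⟨g.symm x, h, by simp⟩)
    have h := hK (g.symm x) hy
    rw [g.apply_symm_apply] at h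
    refine ⟨h.1.symm, ?_⟩
    have h2 := h.2
    rw [← h.1] at h2
    simp only [Equiv.Perm.inv_def]
    omega
/-- The finitary symmetric group `Σ_{n,∞}`, the subgroup of `Perm Y_n` of
finitely supported permutations. -/
def FinitarySymm (n : ℕ) : Subgroup (Equiv.Perm (Fin n × ℕ)) where
  carrier := {g | {x | g x ≠ x}.Finite}
  one_mem' := by simp
  mul_mem' := by
    intro a b ha hb
    refine (ha.union hb).subset ?_
    intro x hx
    by_cases h : b x = x
    · exact Or.inl (by simpa [Equiv.Perm.mul_apply, h] using hx)
    · exact Or.inr h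
  inv_mem' := by
    intro g hg
    refine hg.subset ?_
    intro x hx h
    apply hx
    show g⁻¹ x = x
    rw [Equiv.Perm.inv_def]
    exact (Equiv.symm_apply_eq g).2 h.symm


/-- A (discrete) group is amenable if it admits a Følner sequence: a sequence
of nonempty finite subsets `F i` with `|g·F i ∆ F i| / |F i| → 0` for every
`g ∈ G`. -/
def IsAmenable (G : Type*) [Group G] : Prop :=
  letI := Classical.decEq G
  ∃ F : ℕ → Finset G, (∀ i, (F i).Nonempty) ∧ ∀ g : G,
    Filter.Tendsto
      (fun i => (((symmDiff ((F i).image (fun x => g * x)) (F i)).card : ℝ)) / (F i).card)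
      Filter.atTop (nhds 0)

namespace HoughtonAux

variable {p : ℕ}

abbrev Y (p : ℕ) := Fin (p+1) × ℕ

/-- `g` acts as translation by `m` above height `h`. -/
def Tame (g : Y p → Y p) (m : Fin (p+1) → ℤ) (h : ℕ) : Prop :=
  ∀ x : Y p, h ≤ x.2 → (g x).1 = x.1 ∧ ((g x).2 : ℤ) = (x.2 : ℤ) + m x.1

lemma Tame.mono {g : Y p → Y p} {m h h'} (hg : Tame g m h) (hh : h ≤ h') :
    Tame g m h' := fun x hx => hg x (hh.trans hx)

lemma translates_of_tame {g : Y p → Y p} {m h} (hg : Tame g m h) :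
    Translates (p+1) g m := by
  refine ⟨Finset.univ ×ˢ Finset.range h, fun x hx => ?_⟩
  apply hg
  simp only [Finset.mem_product, Finset.mem_univ, Finset.mem_range, true_and] at hx
  omega

lemma tame_of_translates {g : Y p → Y p} {m} (hg : Translates (p+1) g m) :
    ∃ h, Tame g m h := by
  obtain ⟨K, hK⟩ := hg
  refine ⟨1 + K.sup Prod.snd, fun x hx => ?_⟩
  apply hK
  intro hxK
  have := Finset.le_sup (f := Prod.snd) hxK
  omega

lemma Tame.comp {a b : Y p → Y p} {ma mb ha hb B}
    (hA : Tame a ma ha) (hB : Tame b mb hb) (hband : ∀ i, (mb i).natAbs ≤ B) :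
    Tame (fun x => a (b x)) (fun i => mb i + ma i) (max hb (ha + B)) := by
  intro x hx
  have hx2 : hb ≤ x.2 := le_trans (le_max_left _ _) hx
  obtain ⟨h1, h2⟩ := hB x hx2
  have hbound := hband x.1
  have hbx : ha ≤ (b x).2 := by
    have : (ha : ℤ) + B ≤ (x.2 : ℤ) := by exact_mod_cast le_trans (le_max_right _ _) hx
    omega
  obtain ⟨h3, h4⟩ := hA (b x) hbx
  refine ⟨by rw [h3, h1], ?_⟩
  rw [h4, h2, h1]
  ring

lemma Tame.inv {g : Equiv.Perm (Y p)} {m h B}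
    (hg : Tame ⇑g m h) (hband : ∀ i, (m i).natAbs ≤ B) :
    Tame ⇑g⁻¹ (fun i => -m i) (h + B) := by
  intro x hx
  have hb := hband x.1
  set y : Y p := (x.1, ((x.2 : ℤ) - m x.1).toNat) with hy
  have hy2 : (y.2 : ℤ) = (x.2 : ℤ) - m x.1 := by
    simp only [hy]
    rw [Int.toNat_of_nonneg]
    omega
  have hyh : h ≤ y.2 := by
    have : (h : ℤ) ≤ (y.2 : ℤ) := by omega
    exact_mod_cast this
  obtain ⟨h1, h2⟩ := hg y hyh
  have hgy : g y = x := by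
    have : ((g y).2 : ℤ) = (x.2 : ℤ) := by rw [h2, hy2]; simp [hy]
    refine Prod.ext (by rw [h1, hy]) (by exact_mod_cast this)
  have : g⁻¹ x = y := by rw [← hgy]; simp
  rw [this]
  refine ⟨by simp [hy], ?_⟩
  have hgoal : ((y.2 : ℤ)) = (x.2 : ℤ) + -(m x.1) := by omega
  simpa using hgoal

lemma Tame.fix {g : Y p → Y p} {h} (hg : Tame g 0 h) :
    ∀ x : Y p, h ≤ x.2 → g x = x := by
  intro x hx
  obtain ⟨h1, h2⟩ := hg x hx
  simp only [Pi.zero_apply, add_zero] at h2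
  exact Prod.ext h1 (by exact_mod_cast h2)

/-- Key counting lemma: the translation vector of a bijection sums to zero. -/
lemma sum_vec_eq_zero (g : Equiv.Perm (Y p)) {m : Fin (p+1) → ℤ}
    (hg : Translates (p+1) ⇑g m) : ∑ i, m i = 0 := by
  classical
  obtain ⟨h, hT⟩ := tame_of_translates hg
  set B : ℕ := Finset.univ.sup (fun i => (m i).natAbs) with hBdef
  have hB : ∀ i, (m i).natAbs ≤ B := fun i => Finset.le_sup (f := fun i => (m i).natAbs) (Finset.mem_univ i)
  set Hm : ℕ := ((Finset.univ ×ˢ Finset.range h : Finset (Y p)).sup (fun x => (g x).2))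
  set N : ℕ := h + B + Hm + 1 with hNdef
  have hNB : B ≤ N := by omega
  set A : Finset (Y p) := Finset.univ ×ˢ Finset.range N with hAdef
  set A' : Finset (Y p) := Finset.univ.biUnion
      (fun i => {i} ×ˢ Finset.range (((N : ℤ) + m i).toNat)) with hA'def
  have key : A.image ⇑g = A' := by
    ext y
    simp only [hAdef, hA'def, Finset.mem_image, Finset.mem_biUnion, Finset.mem_product,
      Finset.mem_univ, true_and, Finset.mem_range, Finset.mem_singleton]
    constructor
    · rintro ⟨x, hx, rfl⟩
      refine ⟨(g x).1, rfl, ?_⟩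
      rcases lt_or_ge x.2 h with hc | hc
      · have hgx : (g x).2 ≤ Hm := Finset.le_sup (f := fun x => (g x).2)
          (by simp only [Finset.mem_product, Finset.mem_univ, Finset.mem_range, true_and]; omega)
        have hm := hB (g x).1
        omega
      · obtain ⟨h1, h2⟩ := hT x hc
        rw [h1]
        have hm := hB x.1
        omega
    · rintro ⟨i, hi1, hi2⟩
      subst hi1
      set x := g.symm y with hx
      have hgx : g x = y := by simp [hx]
      refine ⟨x, ?_, hgx⟩
      by_contra hcon
      push_neg at hcon
      have hxh : h ≤ x.2 := by omega
      obtain ⟨h1, h2⟩ := hT x hxh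
      rw [hgx] at h1 h2
      rw [h1] at hi2
      omega
  have cardA : A.card = (p+1) * N := by
    simp [hAdef, Finset.card_product]
  have cardA' : A'.card = ∑ i, ((N : ℤ) + m i).toNat := by
    rw [hA'def, Finset.card_biUnion]
    · apply Finset.sum_congr rfl
      intro i _
      simp
    · intro i _ j _ hij
      simp only [Finset.disjoint_left, Finset.mem_product, Finset.mem_singleton]
      rintro ⟨a, b⟩ ⟨rfl, -⟩ ⟨h2, -⟩
      exact hij h2
  have cardmain : ((p+1) * N : ℕ) = ∑ i, ((N : ℤ) + m i).toNat := by
    rw [← cardA, ← cardA', ← key, Finset.card_image_of_injective _ g.injective]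
  have hcast : ((p+1) * N : ℤ) = ∑ i, ((N : ℤ) + m i) := by
    calc ((p+1) * N : ℤ) = ((((p+1) * N : ℕ) : ℤ)) := by push_cast; ring
    _ = ((∑ i, ((N : ℤ) + m i).toNat : ℕ) : ℤ) := congrArg (Nat.cast : ℕ → ℤ) cardmain
    _ = ∑ i, ((N : ℤ) + m i) := by
        push_cast
        exact Finset.sum_congr rfl fun i _ => by have := hB i; omega
  rw [Finset.sum_add_distrib, Finset.sum_const] at hcast
  simp only [Finset.card_univ, Fintype.card_fin, nsmul_eq_mul] at hcast
  push_cast at hcast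
  linarith

end HoughtonAux
namespace HoughtonAux

variable {p : ℕ}

lemma translates_unique {g : Y p → Y p} {m m' : Fin (p+1) → ℤ}
    (h1 : Translates (p+1) g m) (h2 : Translates (p+1) g m') : m = m' := by
  obtain ⟨K, hK⟩ := h1
  obtain ⟨K', hK'⟩ := h2
  funext i
  set k : ℕ := 1 + (K ∪ K').sup Prod.snd with hk
  have hmem : ((i, k) : Y p) ∉ K ∪ K' := by
    intro hmem
    have := Finset.le_sup (f := Prod.snd) hmem
    simp only [hk] at this
    omega
  simp only [Finset.mem_union, not_or] at hmem
  have e1 := (hK _ hmem.1).2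
  have e2 := (hK' _ hmem.2).2
  rw [e1] at e2
  exact add_left_cancel e2

/-- The translation vector of an element of Houghton's group. -/
noncomputable def vec (g : ↥(Houghton (p+1))) : Fin (p+1) → ℤ :=
  g.2.choose

lemma vec_spec (g : ↥(Houghton (p+1))) :
    Translates (p+1) ⇑(g : Equiv.Perm (Y p)) (vec g) := g.2.choose_spec

lemma vec_eq {g : ↥(Houghton (p+1))} {m : Fin (p+1) → ℤ}
    (h : Translates (p+1) ⇑(g : Equiv.Perm (Y p)) m) : vec g = m :=
  translates_unique (vec_spec g) h

lemma vec_tame (g : ↥(Houghton (p+1))) :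
    ∃ h, Tame ⇑(g : Equiv.Perm (Y p)) (vec g) h := tame_of_translates (vec_spec g)

lemma vec_one : vec (1 : ↥(Houghton (p+1))) = 0 := by
  apply vec_eq
  exact ⟨∅, by intro x _; simp⟩

lemma vec_mul (a b : ↥(Houghton (p+1))) :
    vec (a * b) = vec a + vec b := by
  obtain ⟨ha, hTa⟩ := vec_tame a
  obtain ⟨hb, hTb⟩ := vec_tame b
  apply vec_eq
  have := hTa.comp (b := ⇑(b : Equiv.Perm (Y p))) hTb
    (B := Finset.univ.sup fun i => (vec b i).natAbs)
    (fun i => Finset.le_sup (f := fun i => (vec b i).natAbs) (Finset.mem_univ i))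
  have h2 : Tame ⇑((a * b : ↥(Houghton (p+1))) : Equiv.Perm (Y p))
      (fun i => vec b i + vec a i) _ := this
  have h3 := translates_of_tame h2
  have : (fun i => vec b i + vec a i) = vec a + vec b := by
    funext i; simp [add_comm]
  rwa [this] at h3

lemma vec_inv (a : ↥(Houghton (p+1))) : vec a⁻¹ = -vec a := by
  obtain ⟨ha, hTa⟩ := vec_tame a
  apply vec_eq
  have := hTa.inv (B := Finset.univ.sup fun i => (vec a i).natAbs)
    (fun i => Finset.le_sup (f := fun i => (vec a i).natAbs) (Finset.mem_univ i))
  have h2 : Tame ⇑((a⁻¹ : ↥(Houghton (p+1))) : Equiv.Perm (Y p)) (fun i => -(vec a i)) _ := this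
  have h3 := translates_of_tame h2
  have : (fun i => -(vec a i)) = -vec a := by funext i; simp
  rwa [this] at h3

lemma vec_sum_zero (g : ↥(Houghton (p+1))) : ∑ i, vec g i = 0 :=
  sum_vec_eq_zero _ (vec_spec g)

/-- The homomorphism `H_{p+1} → ℤ^p` recording the translation vector on the
first `p` rays. -/
noncomputable def phi : ↥(Houghton (p+1)) →* Multiplicative (Fin p → ℤ) where
  toFun g := Multiplicative.ofAdd (fun j => vec g j.castSucc)
  map_one' := by
    simp [vec_one]
    rfl
  map_mul' a b := by
    simp only [vec_mul]
    rw [← ofAdd_add]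
    rfl

lemma phi_apply (g : ↥(Houghton (p+1))) (j : Fin p) :
    Multiplicative.toAdd (phi g) j = vec g j.castSucc := rfl

lemma vec_last (g : ↥(Houghton (p+1))) :
    vec g (Fin.last p) = -∑ j : Fin p, vec g j.castSucc := by
  have := vec_sum_zero g
  rw [Fin.sum_univ_castSucc] at this
  linarith

/-- kernel characterization -/
lemma phi_eq_one_iff (g : ↥(Houghton (p+1))) :
    phi g = 1 ↔ {x : Y p | (g : Equiv.Perm (Y p)) x ≠ x}.Finite := by
  constructor
  · intro h
    have hv : ∀ j : Fin p, vec g j.castSucc = 0 := by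
      intro j
      have : (fun j : Fin p => vec g j.castSucc) = 0 := by
        have := congrArg Multiplicative.toAdd h
        exact this
      exact congrFun this j
    have hvec : vec g = 0 := by
      funext i
      rcases Fin.eq_castSucc_or_eq_last i with ⟨j, rfl⟩ | rfl
      · exact hv j
      · rw [vec_last]
        simp [hv]
    obtain ⟨h, hT⟩ := vec_tame g
    rw [hvec] at hT
    apply Set.Finite.subset (Finset.univ ×ˢ Finset.range h : Finset (Y p)).finite_toSet
    intro x hx
    simp only [Finset.coe_product, Finset.coe_univ, Finset.coe_range, Set.mem_prod,
      Set.mem_univ, Set.mem_Iio, true_and]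
    by_contra hc
    exact hx (hT.fix x (by omega))
  · intro hfin
    have hvec : vec g = 0 := by
      apply vec_eq
      refine ⟨hfin.toFinset, fun x hx => ?_⟩
      have : (g : Equiv.Perm (Y p)) x = x := by
        by_contra hc
        exact hx (hfin.mem_toFinset.2 hc)
      simp [this]
    show Multiplicative.ofAdd _ = _
    rw [show (fun j : Fin p => vec g j.castSucc) = 0 by funext j; rw [hvec]; rfl]
    rfl

end HoughtonAux
namespace HoughtonAux

variable {p : ℕ}

/-- basic shift: ray `j` up by `t`, last ray down by `t`. -/
def sigma (j : Fin p) (t : ℕ) : Equiv.Perm (Y p) where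
  toFun x :=
    if x.1 = j.castSucc then (x.1, x.2 + t)
    else if x.1 = Fin.last p then
      (if t ≤ x.2 then (Fin.last p, x.2 - t) else (j.castSucc, x.2))
    else x
  invFun y :=
    if y.1 = j.castSucc then
      (if t ≤ y.2 then (j.castSucc, y.2 - t) else (Fin.last p, y.2))
    else if y.1 = Fin.last p then (Fin.last p, y.2 + t)
    else y
  left_inv := by
    rintro ⟨i, k⟩
    have hj : (j : ℕ) < p := j.isLt
    dsimp only
    split_ifs <;> simp_all [Fin.ext_iff, Prod.ext_iff] <;> omega
  right_inv := by
    rintro ⟨i, k⟩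
    have hj : (j : ℕ) < p := j.isLt
    dsimp only
    split_ifs <;> simp_all [Fin.ext_iff, Prod.ext_iff] <;> omega

/-- the translation vector of `sigma j t`. -/
def msigma (j : Fin p) (t : ℕ) : Fin (p+1) → ℤ := fun i =>
  if i = j.castSucc then (t : ℤ) else if i = Fin.last p then -(t : ℤ) else 0

lemma msigma_bound (j : Fin p) (t : ℕ) (i : Fin (p+1)) : ((msigma j t i).natAbs ≤ t) := by
  unfold msigma
  split <;> [simp; skip]
  split <;> simp

lemma sigma_tame (j : Fin p) (t : ℕ) : Tame ⇑(sigma j t) (msigma j t) t := by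
  rintro ⟨i, k⟩ hk
  simp only at hk
  show ((sigma j t) (i,k)).1 = i ∧ _
  unfold sigma msigma
  simp only [Equiv.coe_fn_mk]
  by_cases h1 : i = j.castSucc
  · subst h1
    rw [if_pos rfl, if_pos rfl]
    simp only [true_and]
    push_cast; ring
  · by_cases h2 : i = Fin.last p
    · subst h2
      rw [if_neg h1, if_pos rfl, if_pos hk, if_neg h1, if_pos rfl]
      simp only [true_and]
      omega
    · rw [if_neg h1, if_neg h2, if_neg h1, if_neg h2]
      simp

lemma sigma_mem (j : Fin p) (t : ℕ) : sigma j t ∈ Houghton (p+1) :=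
  ⟨msigma j t, translates_of_tame (sigma_tame j t)⟩

def sigmaH (j : Fin p) (t : ℕ) : ↥(Houghton (p+1)) := ⟨sigma j t, sigma_mem j t⟩

lemma vec_sigmaH (j : Fin p) (t : ℕ) : vec (sigmaH j t) = msigma j t :=
  vec_eq (translates_of_tame (sigma_tame j t))

/-- tameness of a product of tame permutations, with bounds. -/
lemma tame_list_prod (c : ℕ) :
    ∀ L : List (Equiv.Perm (Y p) × (Fin (p+1) → ℤ)),
    (∀ z ∈ L, Tame ⇑z.1 z.2 c ∧ ∀ i, (z.2 i).natAbs ≤ c) →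
    Tame ⇑((L.map Prod.fst).prod) ((L.map Prod.snd).sum) (c + L.length * c) ∧
      ∀ i, (((L.map Prod.snd).sum) i).natAbs ≤ L.length * c := by
  intro L
  induction L with
  | nil =>
    intro _
    constructor
    · intro x hx
      simp
    · intro i
      simp
  | cons z L ih =>
    intro hz
    obtain ⟨hz1, hz2⟩ := hz z List.mem_cons_self
    obtain ⟨ih1, ih2⟩ := ih (fun w hw => hz w (List.mem_cons_of_mem z hw))
    have hmul := hz1.comp (b := ⇑((L.map Prod.fst).prod)) ih1 (B := L.length * c) ih2
    constructor
    · intro x hx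
      have hx' : max (c + L.length * c) (c + L.length * c) ≤ x.2 := by
        simp only [List.length_cons] at hx
        simp only [max_self]
        have : c + L.length * c ≤ c + (L.length + 1) * c := by nlinarith
        omega
      have := hmul x hx'
      simp only [List.map_cons, List.prod_cons, List.sum_cons, Equiv.Perm.coe_mul,
        Function.comp_apply]
      constructor
      · exact this.1
      · rw [this.2]
        simp only [Pi.add_apply]
        ring
    · intro i
      simp only [List.map_cons, List.sum_cons, List.length_cons, Pi.add_apply]
      calc ((z.2 i + (L.map Prod.snd).sum i)).natAbs
          ≤ (z.2 i).natAbs + ((L.map Prod.snd).sum i).natAbs := Int.natAbs_add_le _ _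
        _ ≤ c + L.length * c := Nat.add_le_add (hz2 i) (ih2 i)
        _ = (L.length + 1) * c := by ring

end HoughtonAux
namespace HoughtonAux

variable {p : ℕ}

/-- translations extended to all rays (last ray balances the sum) -/
def extv (v : Fin p → ℕ) : Fin (p+1) → ℤ := ∑ j, msigma j (v j)

lemma extv_castSucc (v : Fin p → ℕ) (j : Fin p) : extv v j.castSucc = (v j : ℤ) := by
  unfold extv msigma
  rw [Finset.sum_apply]
  have : ∀ j' ∈ Finset.univ, (if (j.castSucc : Fin (p+1)) = j'.castSucc then ((v j' : ℤ))
      else if (j.castSucc : Fin (p+1)) = Fin.last p then -(v j' : ℤ) else 0)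
      = if j' = j then (v j' : ℤ) else 0 := by
    intro j' _
    have h1 : (j.castSucc = j'.castSucc) ↔ (j' = j) := by
      rw [Fin.castSucc_inj]; exact eq_comm
    have h2 : (j.castSucc : Fin (p+1)) ≠ Fin.last p := (Fin.castSucc_lt_last j).ne
    split_ifs with a b c <;> simp_all
  rw [Finset.sum_congr rfl this, Finset.sum_ite_eq' Finset.univ j (fun j' => (v j' : ℤ))]
  simp

lemma extv_last (v : Fin p → ℕ) : extv v (Fin.last p) = -∑ j, (v j : ℤ) := by
  unfold extv msigma
  rw [Finset.sum_apply]
  have : ∀ j' ∈ Finset.univ, (if (Fin.last p : Fin (p+1)) = j'.castSucc then ((v j' : ℤ))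
      else if (Fin.last p : Fin (p+1)) = Fin.last p then -(v j' : ℤ) else 0) = -(v j' : ℤ) := by
    intro j' _
    rw [if_neg (Fin.castSucc_lt_last j').ne', if_pos rfl]
  rw [Finset.sum_congr rfl this]
  rw [Finset.sum_neg_distrib]

/-- section of `phi` over nonnegative vectors -/
def SH (v : Fin p → ℕ) : ↥(Houghton (p+1)) :=
  (List.ofFn (fun j => sigmaH j (v j))).prod

lemma SH_coe (v : Fin p → ℕ) :
    ((SH v : ↥(Houghton (p+1))) : Equiv.Perm (Y p))
      = (List.ofFn (fun j => sigma j (v j))).prod := by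
  unfold SH
  rw [show ((((List.ofFn fun j => sigmaH j (v j)).prod : ↥(Houghton (p+1))) : Equiv.Perm (Y p)))
      = (Houghton (p+1)).subtype (List.ofFn fun j => sigmaH j (v j)).prod from rfl,
    MonoidHom.map_list_prod, List.map_ofFn]
  rfl

lemma SH_tame {v : Fin p → ℕ} {c : ℕ} (hv : ∀ j, v j ≤ c) :
    Tame ⇑((SH v : ↥(Houghton (p+1))) : Equiv.Perm (Y p)) (extv v) (c + p * c) ∧
      ∀ i, ((extv v) i).natAbs ≤ p * c := by
  have := tame_list_prod (p := p) c (List.ofFn (fun j => (sigma j (v j), msigma j (v j))))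
    (by
      intro z hz
      rw [List.mem_ofFn] at hz
      obtain ⟨j, rfl⟩ := hz
      exact ⟨(sigma_tame j (v j)).mono (hv j), fun i => (msigma_bound j (v j) i).trans (hv j)⟩)
  rw [List.map_ofFn, List.map_ofFn] at this
  simp only [List.length_ofFn] at this
  have hsum : (List.ofFn (Prod.snd ∘ fun j => (sigma j (v j), msigma j (v j)))).sum = extv v := by
    rw [List.sum_ofFn]; rfl
  rw [hsum] at this
  rw [SH_coe]
  exact this

lemma vec_SH (v : Fin p → ℕ) : vec (SH v) = extv v := by
  obtain ⟨hT, _⟩ := SH_tame (v := v) (c := Finset.univ.sup v)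
    (fun j => Finset.le_sup (Finset.mem_univ j))
  exact vec_eq (translates_of_tame hT)

/-- The finite set of elements of the Houghton group supported below height `h`. -/
def NSet (h : ℕ) : Set ↥(Houghton (p+1)) :=
  {a | ∀ x : Y p, h ≤ x.2 → (a : Equiv.Perm (Y p)) x = x}

lemma NSet_finite (h : ℕ) : (NSet (p := p) h).Finite := by
  classical
  have hbox : ∀ a : NSet (p := p) h, ∀ z : Fin (p+1) × Fin h,
      ((a.1 : Equiv.Perm (Y p)) (z.1, (z.2 : ℕ))).2 < h := by
    rintro ⟨a, ha⟩ ⟨i, k⟩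
    by_contra hc
    push_neg at hc
    have h1 : (a : Equiv.Perm (Y p)) ((a : Equiv.Perm (Y p)) (i, (k:ℕ)))
        = (a : Equiv.Perm (Y p)) (i, (k:ℕ)) := ha _ hc
    have h2 := (a : Equiv.Perm (Y p)).injective h1
    rw [h2] at hc
    simp only at hc
    omega
  set Φ : NSet (p := p) h → (Fin (p+1) × Fin h → Fin (p+1) × Fin h) :=
    fun a z => (((a.1 : Equiv.Perm (Y p)) (z.1, (z.2 : ℕ))).1,
      ⟨((a.1 : Equiv.Perm (Y p)) (z.1, (z.2 : ℕ))).2, hbox a z⟩) with hΦ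
  have hinj : Function.Injective Φ := by
    rintro ⟨a, ha⟩ ⟨b, hb⟩ hab
    apply Subtype.ext
    apply Subtype.ext
    apply Equiv.coe_fn_injective
    funext x
    rcases lt_or_ge x.2 h with hx | hx
    · have := congrFun hab (x.1, ⟨x.2, hx⟩)
      simp only [hΦ, Prod.mk.injEq, Fin.mk.injEq] at this
      exact Prod.ext this.1 this.2
    · show (a : Equiv.Perm (Y p)) x = (b : Equiv.Perm (Y p)) x
      rw [ha x hx, hb x hx]
  have : Finite (NSet (p := p) h) := Finite.of_injective Φ hinj
  exact Set.toFinite _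

noncomputable def NF (h : ℕ) : Finset ↥(Houghton (p+1)) := (NSet_finite (p := p) h).toFinset

lemma mem_NF {h : ℕ} {a : ↥(Houghton (p+1))} :
    a ∈ NF (p := p) h ↔ ∀ x : Y p, h ≤ x.2 → (a : Equiv.Perm (Y p)) x = x :=
  (NSet_finite h).mem_toFinset

lemma one_mem_NF (h : ℕ) : (1 : ↥(Houghton (p+1))) ∈ NF (p := p) h := by
  rw [mem_NF]; intro x _; rfl

lemma mul_mem_NF {h : ℕ} {a b : ↥(Houghton (p+1))}
    (ha : a ∈ NF (p := p) h) (hb : b ∈ NF (p := p) h) : a * b ∈ NF (p := p) h := by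
  rw [mem_NF] at *
  intro x hx
  show (a : Equiv.Perm (Y p)) ((b : Equiv.Perm (Y p)) x) = x
  rw [hb x hx, ha x hx]

lemma vec_of_mem_NF {h : ℕ} {a : ↥(Houghton (p+1))} (ha : a ∈ NF (p := p) h) :
    vec a = 0 := by
  rw [mem_NF] at ha
  apply vec_eq
  refine ⟨Finset.univ ×ˢ Finset.range h, fun x hx => ?_⟩
  have : h ≤ x.2 := by
    simp only [Finset.mem_product, Finset.mem_univ, Finset.mem_range, true_and] at hx
    omega
  rw [ha x this]
  simp

lemma mem_NF_of_tame {h : ℕ} {a : ↥(Houghton (p+1))}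
    (ha : Tame ⇑(a : Equiv.Perm (Y p)) 0 h) : a ∈ NF (p := p) h :=
  mem_NF.2 ha.fix

end HoughtonAux
namespace HoughtonAux

variable {p : ℕ}

lemma dv_mem (g : ↥(Houghton (p+1))) :
    ∃ C : ℕ, ∀ i, C ≤ i → ∀ v v' : Fin p → ℕ,
      (∀ j, v j ≤ i) → (∀ j, v' j ≤ i) →
      (∀ j, (v' j : ℤ) = (v j : ℤ) + vec g j.castSucc) →
      (SH v')⁻¹ * g * SH v ∈ NF (p := p) ((i+1)*(i+1)) := by
  obtain ⟨hg, hTg⟩ := vec_tame g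
  set Bg := Finset.univ.sup fun i => (vec g i).natAbs with hBg
  have hBgb : ∀ i, (vec g i).natAbs ≤ Bg :=
    fun i => Finset.le_sup (f := fun i => (vec g i).natAbs) (Finset.mem_univ i)
  refine ⟨hg + Bg + 3*(p+1), fun i hi v v' hv hv' hvec => ?_⟩
  have hi1 : 1 ≤ i := by omega
  set d := (SH v')⁻¹ * g * SH (p := p) v with hd
  have hvd : vec d = 0 := by
    funext ii
    rw [hd, vec_mul, vec_mul, vec_inv, vec_SH, vec_SH]
    rcases Fin.eq_castSucc_or_eq_last ii with ⟨j, rfl⟩ | rfl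
    · have := hvec j
      simp only [Pi.add_apply, Pi.neg_apply, Pi.zero_apply, extv_castSucc]
      omega
    · simp only [Pi.add_apply, Pi.neg_apply, extv_last, Pi.zero_apply]
      have h1 := vec_last g
      have h2 : ∑ j, (v' j : ℤ) = ∑ j, ((v j : ℤ) + vec g j.castSucc) :=
        Finset.sum_congr rfl (fun j _ => hvec j)
      rw [Finset.sum_add_distrib] at h2
      linarith
  have hT1 := SH_tame (v := v) (c := i) hv
  have hT2 := SH_tame (v := v') (c := i) hv'
  have hTinv := hT2.1.inv (B := p*i) hT2.2
  have hcomp1 := hTg.comp (b := ⇑((SH v : ↥(Houghton (p+1))) : Equiv.Perm (Y p)))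
    hT1.1 (B := p*i) hT1.2
  have hbound1 : ∀ ii, ((extv v ii + vec g ii).natAbs ≤ p*i + Bg) :=
    fun ii => le_trans (Int.natAbs_add_le _ _) (Nat.add_le_add (hT1.2 ii) (hBgb ii))
  have hcomp2 := hTinv.comp
    (b := fun x => (g : Equiv.Perm (Y p)) (((SH v : ↥(Houghton (p+1))) : Equiv.Perm (Y p)) x))
    hcomp1 (B := p*i + Bg) hbound1
  have hco : ⇑((d : ↥(Houghton (p+1))) : Equiv.Perm (Y p)) =
      fun x => (((SH (p := p) v' : ↥(Houghton (p+1))) : Equiv.Perm (Y p)))⁻¹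
        ((g : Equiv.Perm (Y p)) (((SH v : ↥(Houghton (p+1))) : Equiv.Perm (Y p)) x)) := by
    rw [hd]
    rfl
  rw [← hco] at hcomp2
  have hTrans := translates_of_tame hcomp2
  have hV0 : (fun ii => (extv v ii + vec g ii) + (fun ii => -extv v' ii) ii) = (0 : Fin (p+1) → ℤ) := by
    rw [← vec_eq hTrans]
    exact hvd
  rw [hV0] at hcomp2
  apply mem_NF_of_tame
  apply hcomp2.mono
  have key : i * (3*p + 3 + Bg) ≤ i * i := Nat.mul_le_mul_left i (by omega)
  have expand : i * (3*p + 3 + Bg) = p*i + p*i + p*i + i + i + i + Bg * i := by ring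
  have hBgi : Bg ≤ Bg * i := Nat.le_mul_of_pos_right Bg hi1
  have sq : (i+1)*(i+1) = i*i + i + i + 1 := by ring
  simp only [max_le_iff]
  omega

end HoughtonAux
namespace HoughtonAux

variable {p : ℕ}

lemma SH_mul_inj {h h' : ℕ} {v v' : Fin p → ℕ} {a a' : ↥(Houghton (p+1))}
    (ha : a ∈ NF (p := p) h) (ha' : a' ∈ NF (p := p) h')
    (heq : SH v * a = SH v' * a') : v = v' ∧ a = a' := by
  have hv : vec (SH v * a) = vec (SH v' * a') := by rw [heq]
  rw [vec_mul, vec_mul, vec_SH, vec_SH, vec_of_mem_NF ha, vec_of_mem_NF ha'] at hv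
  simp only [add_zero] at hv
  have hvv : v = v' := by
    funext j
    have := congrFun hv j.castSucc
    rw [extv_castSucc, extv_castSucc] at this
    exact_mod_cast this
  subst hvv
  exact ⟨rfl, mul_left_cancel heq⟩

/-- The Følner sequence for the Houghton group. -/
noncomputable def FolF (p : ℕ) (i : ℕ) : Finset ↥(Houghton (p+1)) :=
  letI := Classical.decEq ↥(Houghton (p+1))
  ((Fintype.piFinset fun _ : Fin p => Finset.range (i+1)) ×ˢ NF (p := p) ((i+1)*(i+1))).image
    (fun z => SH z.1 * z.2)

lemma mem_FolF {i : ℕ} {x : ↥(Houghton (p+1))} :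
    x ∈ FolF p i ↔ ∃ v : Fin p → ℕ, ∃ a : ↥(Houghton (p+1)),
      (∀ j, v j ≤ i) ∧ a ∈ NF (p := p) ((i+1)*(i+1)) ∧ SH v * a = x := by
  letI := Classical.decEq ↥(Houghton (p+1))
  unfold FolF
  rw [Finset.mem_image]
  constructor
  · rintro ⟨⟨v, a⟩, hmem, rfl⟩
    rw [Finset.mem_product] at hmem
    refine ⟨v, a, fun j => ?_, hmem.2, rfl⟩
    have h2 := Fintype.mem_piFinset.1 hmem.1 j
    rw [Finset.mem_range] at h2
    exact Nat.lt_succ_iff.mp h2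
  · rintro ⟨v, a, hv, ha, rfl⟩
    exact ⟨(v, a), Finset.mem_product.2
      ⟨Fintype.mem_piFinset.2 (fun j => Finset.mem_range.2 (Nat.lt_succ_of_le (hv j))), ha⟩, rfl⟩

lemma card_FolF (i : ℕ) :
    (FolF p i).card = (i+1)^p * (NF (p := p) ((i+1)*(i+1))).card := by
  letI := Classical.decEq ↥(Houghton (p+1))
  unfold FolF
  rw [Finset.card_image_of_injOn, Finset.card_product]
  · congr 1
    rw [Fintype.card_piFinset]
    simp
  · rintro ⟨v, a⟩ hz ⟨v2, a2⟩ hz2 heq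
    simp only [Finset.coe_product, Set.mem_prod, Finset.mem_coe, Finset.mem_product] at hz hz2
    obtain ⟨h1, h2⟩ := SH_mul_inj hz.2 hz2.2 heq
    exact Prod.ext h1 h2

lemma folF_nonempty (i : ℕ) : (FolF p i).Nonempty :=
  ⟨SH 0 * 1, mem_FolF.2 ⟨0, 1, fun _ => Nat.zero_le i, one_mem_NF _, rfl⟩⟩

lemma amenable_aux : IsAmenable ↥(Houghton (p+1)) := by
  letI := Classical.decEq ↥(Houghton (p+1))
  refine ⟨FolF p, fun i => folF_nonempty i, fun g => ?_⟩
  obtain ⟨C, hC⟩ := dv_mem g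
  set w : Fin p → ℤ := fun j => vec g j.castSucc with hw
  set W : ℕ := Finset.univ.sup fun j => (w j).natAbs with hWdef
  have hWb : ∀ j, (w j).natAbs ≤ W :=
    fun j => Finset.le_sup (f := fun j => (w j).natAbs) (Finset.mem_univ j)
  set u : ℕ → ℝ := fun i => 2 - 2 * ∏ j : Fin p, (1 - ((w j).natAbs : ℝ)/(i+1)) with hu
  have hulim : Filter.Tendsto u Filter.atTop (nhds 0) := by
    have hone : ∀ j : Fin p, Filter.Tendsto
        (fun i : ℕ => 1 - ((w j).natAbs : ℝ)/(i+1)) Filter.atTop (nhds 1) := by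
      intro j
      have h0 : Filter.Tendsto (fun i : ℕ => ((w j).natAbs : ℝ)/(i+1))
          Filter.atTop (nhds 0) := by
        have h1 := (tendsto_const_div_atTop_nhds_zero_nat ((w j).natAbs : ℝ)).comp
          (Filter.tendsto_add_atTop_nat 1)
        have heq : (fun i : ℕ => ((w j).natAbs : ℝ)/(i+1))
            = (fun n : ℕ => ((w j).natAbs : ℝ)/n) ∘ (fun n => n + 1) := by
          funext i
          simp only [Function.comp_apply]
          push_cast
          rfl
        rw [heq]
        exact h1
      simpa using tendsto_const_nhds.sub h0
    have hprod := tendsto_finset_prod (x := Filter.atTop)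
      (f := fun (j : Fin p) (i : ℕ) => 1 - ((w j).natAbs : ℝ)/(i+1))
      (a := fun _ => 1) Finset.univ (fun j _ => hone j)
    have h2 : Filter.Tendsto u Filter.atTop (nhds (2 - 2 * 1)) := by
      simp only [hu]
      apply Filter.Tendsto.sub tendsto_const_nhds
      exact Filter.Tendsto.mul tendsto_const_nhds (by simpa using hprod)
    simpa using h2
  apply tendsto_of_tendsto_of_tendsto_of_le_of_le' tendsto_const_nhds hulim
  · exact Filter.Eventually.of_forall (fun i => by positivity)
  · filter_upwards [Filter.eventually_ge_atTop (C + W)] with i hi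
    have hCi : C ≤ i := by omega
    have hWi : W ≤ i := by omega
    set N := NF (p := p) ((i+1)*(i+1)) with hN
    set A := (FolF p i).image (fun x => g * x) with hA
    set P := Fintype.piFinset (fun j : Fin p => Finset.Ico ((-(w j)).toNat) ((i+1) - (w j).toNat))
      with hP
    have cardP : P.card = ∏ j : Fin p, ((i+1) - (w j).natAbs) := by
      rw [hP, Fintype.card_piFinset]
      apply Finset.prod_congr rfl
      intro j _
      rw [Nat.card_Ico]
      have := hWb j
      omega
    have cardB := card_FolF (p := p) i
    have cardA : A.card = (FolF p i).card :=
      Finset.card_image_of_injective _ (mul_right_injective g)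
    have hNpos : 0 < N.card := Finset.card_pos.2 ⟨1, one_mem_NF _⟩
    have hinj : P.card * N.card ≤ (A ∩ FolF p i).card := by
      have hmain := Finset.card_le_card_of_injOn (s := P ×ˢ N) (t := A ∩ FolF p i)
        (fun z => g * (SH z.1 * z.2)) ?_ ?_
      · rwa [Finset.card_product] at hmain
      · rintro ⟨v, a⟩ hz
        simp only [Finset.coe_product, Set.mem_prod, Finset.mem_coe] at hz
        obtain ⟨hv, ha⟩ := hz
        have hv1 : ∀ j, (-(w j)).toNat ≤ v j ∧ v j < (i+1) - (w j).toNat := by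
          intro j
          have := Fintype.mem_piFinset.1 hv j
          rwa [Finset.mem_Ico] at this
        have hvle : ∀ j, v j ≤ i := by
          intro j
          have h1 := hv1 j
          have h2 := hWb j
          omega
        rw [Finset.mem_coe, Finset.mem_inter]
        refine ⟨?_, ?_⟩
        · show g * (SH v * a) ∈ A
          exact Finset.mem_image_of_mem _ (mem_FolF.2 ⟨v, a, hvle, ha, rfl⟩)
        · show g * (SH v * a) ∈ FolF p i
          set v' : Fin p → ℕ := fun j => ((v j : ℤ) + w j).toNat with hv'
          have hv'spec : ∀ j, (v' j : ℤ) = (v j : ℤ) + w j := by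
            intro j
            have h1 := hv1 j
            have h2 := hWb j
            rw [hv']
            simp only
            omega
          have hv'le : ∀ j, v' j ≤ i := by
            intro j
            have h1 := hv1 j
            have h2 := hWb j
            have h3 := hv'spec j
            omega
          have hd := hC i hCi v v' hvle hv'le (fun j => hv'spec j)
          have key : g * (SH v * a) = SH (p := p) v' * (((SH v')⁻¹ * g * SH v) * a) := by
            group
          rw [key]
          exact mem_FolF.2 ⟨v', ((SH v')⁻¹ * g * SH v) * a, hv'le, mul_mem_NF hd ha, rfl⟩
      · rintro ⟨v, a⟩ hz ⟨v2, a2⟩ hz2 heq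
        simp only [Finset.coe_product, Set.mem_prod, Finset.mem_coe, Finset.mem_product] at hz hz2
        have hcancel := mul_left_cancel heq
        obtain ⟨h1, h2⟩ := SH_mul_inj hz.2 hz2.2 hcancel
        exact Prod.ext h1 h2
    have hsym : (symmDiff A (FolF p i)).card + 2 * (P.card * N.card)
        ≤ 2 * (FolF p i).card := by
      have e1 := Finset.card_sdiff_add_card_inter A (FolF p i)
      have e2 := Finset.card_sdiff_add_card_inter (FolF p i) A
      have e3 : (FolF p i ∩ A).card = (A ∩ FolF p i).card := by rw [Finset.inter_comm]
      have e4 : (symmDiff A (FolF p i)).card ≤ (A \ FolF p i).card + (FolF p i \ A).card := by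
        rw [symmDiff_def, Finset.sup_eq_union]
        exact Finset.card_union_le _ _
      omega
    -- now the real-number estimate
    have hFpos : (0 : ℝ) < ((FolF p i).card : ℝ) := by
      have := (folF_nonempty (p := p) i).card_pos
      positivity
    have hcastP : ((P.card : ℝ)) = ∏ j : Fin p, (((i:ℝ)+1) - ((w j).natAbs : ℝ)) := by
      rw [cardP, Nat.cast_prod]
      apply Finset.prod_congr rfl
      intro j _
      have := hWb j
      rw [Nat.cast_sub (by omega)]
      push_cast
      ring
    have hprodeq : ∏ j : Fin p, (1 - ((w j).natAbs : ℝ)/(i+1))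
        = (P.card : ℝ) / ((i:ℝ)+1)^p := by
      have hpow : (((i:ℝ)+1)^p) = ∏ _j : Fin p, ((i:ℝ)+1) := by
        rw [Finset.prod_const, Finset.card_univ, Fintype.card_fin]
      rw [hcastP, hpow, ← Finset.prod_div_distrib]
      apply Finset.prod_congr rfl
      intro j _
      have hiR : ((i:ℝ)+1) ≠ 0 := by positivity
      field_simp
    have hnum : ((symmDiff A (FolF p i)).card : ℝ)
        ≤ 2*((FolF p i).card : ℝ) - 2*((P.card : ℝ) * (N.card : ℝ)) := by
      have hcast := hsym
      have : ((symmDiff A (FolF p i)).card : ℝ) + 2 * ((P.card : ℝ) * (N.card : ℝ))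
          ≤ 2 * ((FolF p i).card : ℝ) := by exact_mod_cast hcast
      linarith
    have hcF : ((FolF p i).card : ℝ) = ((i:ℝ)+1)^p * (N.card : ℝ) := by
      rw [cardB]
      push_cast
      ring
    have hNR : (N.card : ℝ) ≠ 0 := ne_of_gt (by exact_mod_cast hNpos)
    have hpowR : (((i:ℝ)+1)^p) ≠ 0 := by positivity
    calc ((symmDiff A (FolF p i)).card : ℝ) / ((FolF p i).card : ℝ)
        ≤ (2*((FolF p i).card : ℝ) - 2*((P.card : ℝ) * (N.card : ℝ)))
            / ((FolF p i).card : ℝ) := by gcongr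
      _ = u i := by
          simp only [hu]
          rw [hprodeq, hcF]
          field_simp

end HoughtonAux
namespace HoughtonAux

variable {p : ℕ}

lemma phi_surjective : Function.Surjective (phi (p := p)) := by
  intro u
  refine ⟨SH (fun j => (Multiplicative.toAdd u j).toNat)
    * (SH (fun j => (-(Multiplicative.toAdd u j)).toNat))⁻¹, ?_⟩
  have hvec : (fun j => vec (SH (fun j => (Multiplicative.toAdd u j).toNat)
      * (SH (fun j => (-(Multiplicative.toAdd u j)).toNat))⁻¹) j.castSucc)
      = Multiplicative.toAdd u := by
    funext j
    rw [vec_mul, vec_inv, vec_SH, vec_SH]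
    simp only [Pi.add_apply, Pi.neg_apply, extv_castSucc]
    omega
  show Multiplicative.ofAdd _ = u
  rw [hvec]
  rfl

end HoughtonAux


/-- Houghton's group `H_n` is amenable for every `n ≥ 1`: it is an extension
of the abelian group `ℤ^{n−1}` by the locally finite group `Σ_{n,∞}`, i.e.
there is a surjection `H_n → ℤ^{n−1}` whose kernel consists exactly of the
finitely supported permutations. -/
theorem houghton_amenable (n : ℕ) (hn : 1 ≤ n) :
    IsAmenable ↥(Houghton n) ∧
    ∃ φ : ↥(Houghton n) →* Multiplicative (Fin (n - 1) → ℤ),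
      Function.Surjective φ ∧
      ∀ g : ↥(Houghton n),
        φ g = 1 ↔ {x | (g : Equiv.Perm (Fin n × ℕ)) x ≠ x}.Finite := by
  obtain ⟨p, rfl⟩ : ∃ p, n = p + 1 := ⟨n - 1, by omega⟩
  refine ⟨HoughtonAux.amenable_aux, ?_⟩
  exact ⟨HoughtonAux.phi, HoughtonAux.phi_surjective,
    fun g => HoughtonAux.phi_eq_one_iff g⟩
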